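/- Let K be an algebraically closed field of characteristic zero and let c ∈ K(x) be a rational function not lying in K. Then there are at most 4 values λ ∈ K such that the rational function c + λ has only multiple zeros, i.e. such that every zero of c + λ on the projective line (including a possible zero at infinity) has multiplicity at least 2. -/

import Mathlib

open Polynomial

/-- A rational function `f` has only multiple zeros if every root of its numerator
has multiplicity at least `2`, and moreover if `f` has a zero at infinity
(i.e. `deg num < deg denom`) then that zero has multiplicity at least `2`. -/
def HasOnlyMultipleZeros {K : Type*} [Field K] (f : RatFunc K) : Prop :=
  (∀ a : K, f.num.eval a = 0 → 2 ≤ f.num.rootMultiplicity a) ∧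
  (f.num.natDegree < f.denom.natDegree → f.num.natDegree + 2 ≤ f.denom.natDegree)

theorem ratfunc_add_C_num_denom {K : Type*} [Field K] (c : RatFunc K) (lam : K) :
    (c + RatFunc.C lam).num = c.num + Polynomial.C lam * c.denom ∧
    (c + RatFunc.C lam).denom = c.denom := by
  have hq0 : c.denom ≠ 0 := c.denom_ne_zero
  have hcop : IsCoprime (c.num + Polynomial.C lam * c.denom) c.denom :=
    (RatFunc.isCoprime_num_denom c).add_mul_right_left _
  have heq : c + RatFunc.C lam =
      algebraMap K[X] (RatFunc K) (c.num + Polynomial.C lam * c.denom) /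
        algebraMap K[X] (RatFunc K) c.denom := by
    have hcc : algebraMap K[X] (RatFunc K) c.num = c * algebraMap K[X] (RatFunc K) c.denom :=
      (div_eq_iff (RatFunc.algebraMap_ne_zero hq0)).mp (RatFunc.num_div_denom c)
    rw [eq_div_iff (RatFunc.algebraMap_ne_zero hq0), map_add, map_mul,
      RatFunc.algebraMap_C, hcc, add_mul]
  have hmul : (c + RatFunc.C lam).num * c.denom =
      (c.num + Polynomial.C lam * c.denom) * (c + RatFunc.C lam).denom :=
    (RatFunc.num_mul_eq_mul_denom_iff hq0).mpr heq
  have hd1 : (c + RatFunc.C lam).denom ∣ c.denom := by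
    rw [heq]; exact RatFunc.denom_div_dvd _ _
  have hd2 : c.denom ∣ (c + RatFunc.C lam).denom := by
    refine hcop.symm.dvd_of_dvd_mul_left ?_
    exact hmul ▸ Dvd.intro_left _ rfl
  have hde : (c + RatFunc.C lam).denom = c.denom :=
    Polynomial.eq_of_monic_of_associated (RatFunc.monic_denom _) (RatFunc.monic_denom c)
      (associated_of_dvd_dvd hd1 hd2)
  refine ⟨?_, hde⟩
  rw [hde] at hmul
  exact mul_right_cancel₀ hq0 hmul

theorem at_most_four_multiple_zero_translates
    {K : Type*} [Field K] [IsAlgClosed K] [CharZero K]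
    (c : RatFunc K) (hc : ∀ k : K, c ≠ RatFunc.C k)
    (B : Finset K)
    (hB : ∀ lam ∈ B, HasOnlyMultipleZeros (c + RatFunc.C lam)) :
    B.card ≤ 4 := by
  classical
  by_contra hcard
  push_neg at hcard
  set p : K[X] := c.num with hpdef
  set q : K[X] := c.denom with hqdef
  have hq0 : q ≠ 0 := c.denom_ne_zero
  set N : ℕ := max p.natDegree q.natDegree with hNdef
  -- if both p and q are constants then c is constant
  have hconst : ∀ k : K, p.natDegree = 0 → q.natDegree = 0 → False := by
    intro k hp0 hq0'
    obtain ⟨a, ha⟩ := Polynomial.natDegree_eq_zero.mp hp0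
    have hq1 : q = 1 := by
      have : q.Monic := RatFunc.monic_denom c
      exact this.natDegree_eq_zero.mp hq0'
    have : c = RatFunc.C a := by
      rw [← RatFunc.num_div_denom c, ← hpdef, ← hqdef, hq1, ← ha, map_one, div_one,
        RatFunc.algebraMap_C]
    exact hc a this
  have hN1 : 1 ≤ N := by
    have h1 : p.natDegree ≤ N := le_max_left _ _
    have h2 : q.natDegree ≤ N := le_max_right _ _
    by_contra h
    exact hconst 0 (by omega) (by omega)
  -- the Wronskian
  set W : K[X] := wronskian q p with hWdef
  have hW0 : W ≠ 0 := by
    intro h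
    obtain ⟨h1, h2⟩ := ((RatFunc.isCoprime_num_denom c).symm.wronskian_eq_zero_iff).mp h
    exact hconst 0 (natDegree_eq_zero_of_derivative_eq_zero h2)
      (natDegree_eq_zero_of_derivative_eq_zero h1)
  have hWlt : W.natDegree < q.natDegree + p.natDegree := natDegree_wronskian_lt_add hW0
  -- translated numerators
  set P : K → K[X] := fun lam => p + Polynomial.C lam * q with hPdef
  have hPnum : ∀ lam, (c + RatFunc.C lam).num = P lam :=
    fun lam => (ratfunc_add_C_num_denom c lam).1
  have hPle : ∀ lam, (P lam).natDegree ≤ N := by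
    intro lam
    refine (Polynomial.natDegree_add_le _ _).trans (max_le (le_max_left _ _) ?_)
    exact (Polynomial.natDegree_C_mul_le _ _).trans (le_max_right _ _)
  have hPcop : ∀ lam, IsCoprime (P lam) q :=
    fun lam => (RatFunc.isCoprime_num_denom c).add_mul_right_left _
  -- W is the wronskian of q and any translate
  have hWP : ∀ lam, W = wronskian q (P lam) := by
    intro lam
    simp only [hWdef, hPdef, wronskian, derivative_add, derivative_C_mul]
    ring
  -- pairwise coprimality of translates
  have hPP : ∀ a b : K, a ≠ b → IsCoprime (P a) (P b) := by
    intro a b hab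
    have hu : IsUnit (Polynomial.C (b - a)) :=
      Polynomial.isUnit_C.mpr (sub_ne_zero.mpr (Ne.symm hab)).isUnit
    have h1 : IsCoprime (P a) (Polynomial.C (b - a) * q) :=
      (isCoprime_mul_unit_left_right hu _ _).mpr (hPcop a)
    have h2 := h1.add_mul_right_right 1
    have h3 : Polynomial.C (b - a) * q + 1 * P a = P b := by
      simp only [hPdef, Polynomial.C_sub]
      ring
    rwa [h3] at h2
  -- the multiple-root divisor
  set g : K → K[X] := fun lam =>
    ∏ a ∈ (P lam).roots.toFinset, (X - Polynomial.C a) ^ ((P lam).rootMultiplicity a - 1)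
    with hgdef
  have hgmonic : ∀ lam, (g lam).Monic := by
    intro lam
    exact monic_prod_of_monic _ _ fun a _ => (monic_X_sub_C a).pow _
  have hXpairwise : ∀ lam, (↑(P lam).roots.toFinset : Set K).Pairwise
      (Function.onFun IsCoprime fun a => (X - Polynomial.C a) ^ ((P lam).rootMultiplicity a - 1)) := by
    intro lam a _ b _ hab
    exact (Polynomial.isCoprime_X_sub_C_of_isUnit_sub (sub_ne_zero.mpr hab).isUnit).pow
  have hgdvdP : ∀ lam, g lam ∣ P lam := by
    intro lam
    refine Finset.prod_dvd_of_coprime (hXpairwise lam) fun a _ => ?_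
    exact (pow_dvd_pow _ (Nat.sub_le _ 1)).trans ((P lam).pow_rootMultiplicity_dvd a)
  have hgdvdW : ∀ lam, g lam ∣ W := by
    intro lam
    refine Finset.prod_dvd_of_coprime (hXpairwise lam) fun a _ => ?_
    rw [hWP lam, wronskian]
    refine dvd_sub (dvd_mul_of_dvd_right ?_ _) (dvd_mul_of_dvd_right ?_ _)
    · exact (pow_dvd_pow _ ((rootMultiplicity_sub_one_le_derivative_rootMultiplicity _ a))).trans
        ((derivative (P lam)).pow_rootMultiplicity_dvd a)
    · exact (pow_dvd_pow _ (Nat.sub_le _ 1)).trans ((P lam).pow_rootMultiplicity_dvd a)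
  -- the exceptional set of degree-dropping translates
  set S : Finset K := B.filter (fun lam => (P lam).natDegree ≠ N) with hSdef
  have hScard : S.card ≤ 1 := by
    rw [Finset.card_le_one]
    intro a ha b hb
    by_contra hab
    simp only [hSdef, Finset.mem_filter] at ha hb
    have halt : (P a).natDegree < N := lt_of_le_of_ne (hPle a) ha.2
    have hblt : (P b).natDegree < N := lt_of_le_of_ne (hPle b) hb.2
    have hdiff : P a - P b = Polynomial.C (a - b) * q := by
      simp only [hPdef, Polynomial.C_sub]; ring
    have hqlt : q.natDegree < N := by
      have h1 : (P a - P b).natDegree = q.natDegree := by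
        rw [hdiff, Polynomial.natDegree_C_mul (sub_ne_zero.mpr hab)]
      have h2 : (P a - P b).natDegree ≤ max (P a).natDegree (P b).natDegree :=
        Polynomial.natDegree_sub_le _ _
      omega
    have hpN : p.natDegree = N := by
      have := le_max_left p.natDegree q.natDegree
      have := le_max_right p.natDegree q.natDegree
      omega
    have : (P a).natDegree = p.natDegree := by
      refine Polynomial.natDegree_add_eq_left_of_natDegree_lt ?_
      calc (Polynomial.C a * q).natDegree ≤ q.natDegree := Polynomial.natDegree_C_mul_le _ _
        _ < p.natDegree := by omega
    omega
  set B' : Finset K := B \ S with hB'def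
  have hB'card : 4 ≤ B'.card := by
    have h1 : S ⊆ B := Finset.filter_subset _ _
    have h2 := Finset.card_sdiff_of_subset h1
    rw [← hB'def] at h2
    omega
  have hB'mem : ∀ lam ∈ B', lam ∈ B ∧ (P lam).natDegree = N := by
    intro lam hlam
    rw [hB'def, Finset.mem_sdiff] at hlam
    refine ⟨hlam.1, ?_⟩
    by_contra h
    exact hlam.2 (Finset.mem_filter.mpr ⟨hlam.1, h⟩)
  -- the product of the g's divides W
  have hprod : (∏ lam ∈ B', g lam) ∣ W := by
    refine Finset.prod_dvd_of_coprime ?_ (fun lam _ => hgdvdW lam)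
    intro a _ b _ hab
    exact ((hPP a b hab).of_isCoprime_of_dvd_left (hgdvdP a)).of_isCoprime_of_dvd_right
      (hgdvdP b)
  have hsum : ∑ lam ∈ B', (g lam).natDegree ≤ W.natDegree := by
    have h1 : (∏ lam ∈ B', g lam).natDegree ≤ W.natDegree :=
      Polynomial.natDegree_le_of_dvd hprod hW0
    rwa [Polynomial.natDegree_prod _ _ (fun lam _ => (hgmonic lam).ne_zero)] at h1
  -- lower bound on the degrees of the g's
  have hglow : ∀ lam ∈ B', N ≤ 2 * (g lam).natDegree := by
    intro lam hlam
    obtain ⟨hlamB, hdeg⟩ := hB'mem lam hlam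
    have hP0 : P lam ≠ 0 := by
      intro h
      rw [h] at hdeg
      simp only [Polynomial.natDegree_zero] at hdeg
      omega
    have hroots : Multiset.card (P lam).roots = N := by
      rw [← hdeg]
      exact Polynomial.splits_iff_card_roots.mp (IsAlgClosed.splits _)
    have hmult : ∀ a ∈ (P lam).roots.toFinset, 2 ≤ (P lam).rootMultiplicity a := by
      intro a ha
      have hroot : (P lam).IsRoot a := by
        rw [Multiset.mem_toFinset, Polynomial.mem_roots hP0] at ha
        exact ha
      have := (hB lam hlamB).1 a (by rwa [hPnum lam])
      rwa [hPnum lam] at this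
    have hgdeg : (g lam).natDegree =
        ∑ a ∈ (P lam).roots.toFinset, ((P lam).rootMultiplicity a - 1) := by
      rw [hgdef]
      rw [Polynomial.natDegree_prod _ _
        (fun a _ => ((monic_X_sub_C a).pow _).ne_zero)]
      refine Finset.sum_congr rfl fun a _ => ?_
      rw [Polynomial.natDegree_pow, Polynomial.natDegree_X_sub_C, mul_one]
    have hsummult : ∑ a ∈ (P lam).roots.toFinset, (P lam).rootMultiplicity a = N := by
      rw [← hroots]
      have := Multiset.toFinset_sum_count_eq (P lam).roots
      simp only [Polynomial.count_roots] at this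
      exact this
    have hle : ∑ a ∈ (P lam).roots.toFinset, (P lam).rootMultiplicity a ≤
        ∑ a ∈ (P lam).roots.toFinset, 2 * ((P lam).rootMultiplicity a - 1) := by
      refine Finset.sum_le_sum fun a ha => ?_
      have := hmult a ha
      omega
    rw [← Finset.mul_sum] at hle
    rw [hgdeg]
    omega
  -- conclude
  have hkey : B'.card * N ≤ ∑ lam ∈ B', 2 * (g lam).natDegree := by
    have := Finset.card_nsmul_le_sum B' (fun lam => 2 * (g lam).natDegree) N hglow
    simpa [smul_eq_mul] using this
  have hfin : B'.card * N ≤ 2 * W.natDegree := by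
    calc B'.card * N ≤ ∑ lam ∈ B', 2 * (g lam).natDegree := hkey
      _ = 2 * ∑ lam ∈ B', (g lam).natDegree := by rw [Finset.mul_sum]
      _ ≤ 2 * W.natDegree := by omega
  have h4N : 4 * N ≤ B'.card * N := Nat.mul_le_mul_right N hB'card
  have hple : p.natDegree ≤ N := le_max_left _ _
  have hqle : q.natDegree ≤ N := le_max_right _ _
  omega
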